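/- As n → ∞, log n + (n/2)(n^{−2/n} − 1) = (log² n)/n + O((log³ n)/n²); in particular log‖P_n‖₀ → 0 for P_n(z) = n z^n − 1 while log M(P_n) = log n → ∞. -/

import Mathlib

open Filter

-- log n ≤ n / 2 for n ≥ 1 (real x ≥ 1)
lemma log_le_half (x : ℝ) (hx : 1 ≤ x) : Real.log x ≤ x / 2 := by
  have hx0 : 0 < x := by linarith
  have hs : Real.sqrt x ^ 2 = x := Real.sq_sqrt hx0.le
  have h1 : Real.log x = 2 * Real.log (Real.sqrt x) := by
    have h := Real.log_pow (n := 2) (x := Real.sqrt x)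
    rw [hs] at h
    rw [h]; norm_num
  have h2 : Real.log (Real.sqrt x) ≤ Real.sqrt x - 1 :=
    Real.log_le_sub_one_of_pos (Real.sqrt_pos.mpr hx0)
  nlinarith [sq_nonneg (Real.sqrt x - 2)]

-- main asymptotic bound, pointwise
lemma key_bound (n : ℕ) (hn : 1 ≤ n) :
    |Real.log n + (n / 2 : ℝ) * ((n : ℝ) ^ (-2 / (n : ℝ)) - 1) -
        (Real.log n) ^ 2 / n| ≤ (8 / 9) * ((Real.log n) ^ 3 / (n : ℝ) ^ 2) := by
  have hn0 : (0 : ℝ) < n := by exact_mod_cast hn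
  have hn1 : (1 : ℝ) ≤ n := by exact_mod_cast hn
  set L := Real.log n with hL
  have hL0 : 0 ≤ L := Real.log_nonneg hn1
  set y : ℝ := L * (-2 / n) with hy
  have hrw : (n : ℝ) ^ (-2 / (n : ℝ)) = Real.exp y := by
    rw [Real.rpow_def_of_pos hn0]
  have hyabs : |y| = 2 * L / n := by
    rw [hy, abs_mul, abs_of_nonneg hL0, abs_div, abs_neg]
    rw [abs_of_nonneg hn0.le, abs_of_nonneg (by norm_num : (0:ℝ) ≤ 2)]
    field_simp
  have hy1 : |y| ≤ 1 := by
    rw [hyabs]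
    have := log_le_half n hn1
    rw [div_le_one hn0]
    linarith
  have hexp := Real.exp_bound hy1 (n := 3) (by norm_num)
  have hsum : ∑ m ∈ Finset.range 3, y ^ m / (Nat.factorial m) = 1 + y + y ^ 2 / 2 := by
    norm_num [Finset.sum_range_succ, Nat.factorial]
  rw [hsum] at hexp
  have hD : Real.log n + (n / 2 : ℝ) * ((n : ℝ) ^ (-2 / (n : ℝ)) - 1) - (Real.log n) ^ 2 / n
      = (n / 2) * (Real.exp y - (1 + y + y ^ 2 / 2)) := by
    rw [hrw, ← hL]
    have h1 : (n / 2 : ℝ) * y = -L := by rw [hy]; field_simp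
    have h2 : (n / 2 : ℝ) * (y ^ 2 / 2) = L ^ 2 / n := by
      rw [hy]; field_simp
    nlinarith [h1, h2]
  rw [hD, abs_mul]
  have habs : |(n : ℝ) / 2| = n / 2 := abs_of_nonneg (by positivity)
  rw [habs]
  have hb : |Real.exp y - (1 + y + y ^ 2 / 2)| ≤ (2 * L / n) ^ 3 * (4 / (6 * 3)) := by
    calc |Real.exp y - (1 + y + y ^ 2 / 2)| ≤ |y| ^ 3 * (Nat.succ 3 / (Nat.factorial 3 * 3)) :=
          hexp
      _ = (2 * L / n) ^ 3 * (4 / (6 * 3)) := by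
          rw [hyabs]; norm_num [Nat.factorial]
  calc (n / 2 : ℝ) * |Real.exp y - (1 + y + y ^ 2 / 2)|
      ≤ (n / 2) * ((2 * L / n) ^ 3 * (4 / (6 * 3))) := by
        apply mul_le_mul_of_nonneg_left hb (by positivity)
    _ = (8 / 9) * (L ^ 3 / (n : ℝ) ^ 2) := by field_simp; ring

theorem stmt19 :
    ((fun n : ℕ => Real.log n + (n / 2) * ((n : ℝ) ^ (-2 / (n : ℝ)) - 1) -
          (Real.log n) ^ 2 / n) =O[atTop] fun n : ℕ => (Real.log n) ^ 3 / (n : ℝ) ^ 2) ∧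
      Tendsto (fun n : ℕ => Real.log n + (n / 2) * ((n : ℝ) ^ (-2 / (n : ℝ)) - 1))
        atTop (nhds 0) ∧
      Tendsto (fun n : ℕ => Real.log n) atTop atTop := by
  have hnat : Tendsto (fun n : ℕ => (n : ℝ)) atTop atTop := tendsto_natCast_atTop_atTop
  have hbigO : (fun n : ℕ => Real.log n + (n / 2) * ((n : ℝ) ^ (-2 / (n : ℝ)) - 1) -
        (Real.log n) ^ 2 / n) =O[atTop] fun n : ℕ => (Real.log n) ^ 3 / (n : ℝ) ^ 2 := by
    rw [Asymptotics.isBigO_iff]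
    refine ⟨8 / 9, ?_⟩
    filter_upwards [eventually_ge_atTop 1] with n hn
    have hn1 : (1 : ℝ) ≤ n := by exact_mod_cast hn
    have hL0 : 0 ≤ Real.log n := Real.log_nonneg hn1
    have := key_bound n hn
    rw [Real.norm_eq_abs, Real.norm_eq_abs]
    rwa [abs_of_nonneg (by positivity : (0:ℝ) ≤ (Real.log n) ^ 3 / (n : ℝ) ^ 2)]
  -- log^k n / n^j → 0
  have h2 : Tendsto (fun n : ℕ => (Real.log n) ^ 2 / (n : ℝ)) atTop (nhds 0) := by
    have := (Real.tendsto_pow_log_div_mul_add_atTop 1 0 2 one_ne_zero).comp hnat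
    simpa [Function.comp_def] using this
  have h3 : Tendsto (fun n : ℕ => (Real.log n) ^ 3 / (n : ℝ) ^ 2) atTop (nhds 0) := by
    have ha := (Real.tendsto_pow_log_div_mul_add_atTop 1 0 3 one_ne_zero).comp hnat
    have hb : Tendsto (fun n : ℕ => ((n : ℝ))⁻¹) atTop (nhds 0) :=
      tendsto_inv_atTop_zero.comp hnat
    have := ha.mul hb
    rw [mul_zero] at this
    refine this.congr' ?_
    filter_upwards [eventually_ge_atTop 1] with n hn
    simp only [Function.comp_apply, one_mul, add_zero]
    rw [pow_two, ← div_div]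
    ring
  refine ⟨hbigO, ?_, Real.tendsto_log_atTop.comp hnat⟩
  have hd : Tendsto (fun n : ℕ => Real.log n + (n / 2) * ((n : ℝ) ^ (-2 / (n : ℝ)) - 1) -
      (Real.log n) ^ 2 / n) atTop (nhds 0) := hbigO.trans_tendsto h3
  have := hd.add h2
  rw [add_zero] at this
  refine this.congr ?_
  intro n; ring
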